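/- Let p be a prime and let g ∈ F_{p^2}[x]. Then f(x) = x + g(x^p + x) permutes F_{p^2} if and only if the map x ↦ x + g(x)^p + g(x) permutes F_p. -/

import Mathlib

/-- Over `F_{p^2}`, `f(x) = x + g(x^p + x)` permutes `F_{p^2}` iff
`x ↦ x + g(x)^p + g(x)` permutes `F_p`. -/
theorem stmt_10 (p : ℕ) (hp : p.Prime)
    (F : Type*) [Field F] [Fintype F] (hq : Fintype.card F = p ^ 2) (hchar : CharP F p)
    (g : Polynomial F) :
    Function.Bijective (fun x : F => x + g.eval (x ^ p + x)) ↔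
      Set.BijOn (fun x : F => x + (g.eval x) ^ p + g.eval x)
        {x : F | x ^ p = x} {x : F | x ^ p = x} := by
  classical
  haveI := Fact.mk hp
  have h2 : 2 ≤ p := hp.two_le
  set S : Set F := {x : F | x ^ p = x} with hS
  have hpow : ∀ x : F, (x ^ p) ^ p = x := by
    intro x
    have := FiniteField.pow_card x
    rw [hq] at this
    rw [← pow_mul, ← sq, this]
  have hfrob : ∀ a b : F, (a + b) ^ p = a ^ p + b ^ p := fun a b => add_pow_char a b p
  have hφS : ∀ x : F, (x ^ p + x) ∈ S := by
    intro x
    simp only [hS, Set.mem_setOf_eq, hfrob, hpow]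
    ring
  have hMapsTo : Set.MapsTo (fun x : F => x + (g.eval x) ^ p + g.eval x) S S := by
    intro t ht
    simp only [hS, Set.mem_setOf_eq] at ht ⊢
    rw [hfrob, hfrob, ht, hpow]
    ring
  -- key commutation: φ (f x) = h (φ x)
  have hcomm : ∀ x : F,
      (x + g.eval (x ^ p + x)) ^ p + (x + g.eval (x ^ p + x)) =
        (x ^ p + x) + (g.eval (x ^ p + x)) ^ p + g.eval (x ^ p + x) := by
    intro x
    rw [hfrob]
    ring
  -- surjectivity of x ↦ x^p + x onto S
  have hsurj : ∀ s ∈ S, ∃ x : F, x ^ p + x = s := by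
    set φ : F →+ F :=
      { toFun := fun x => x ^ p + x
        map_zero' := by simp [zero_pow hp.ne_zero]
        map_add' := by intro a b; rw [hfrob]; ring }
    have hdeg1 : (Polynomial.X ^ p + Polynomial.X : Polynomial F).natDegree = p := by
      compute_degree!
      · rw [if_neg (by omega)]; norm_num
      · omega
    have hdeg2 : (Polynomial.X ^ p - Polynomial.X : Polynomial F).natDegree = p := by
      compute_degree!
      · rw [if_neg (by omega)]; norm_num
      · omega
    have hne1 : (Polynomial.X ^ p + Polynomial.X : Polynomial F) ≠ 0 := by
      intro h; rw [h] at hdeg1; simp at hdeg1; omega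
    have hne2 : (Polynomial.X ^ p - Polynomial.X : Polynomial F) ≠ 0 := by
      intro h; rw [h] at hdeg2; simp at hdeg2; omega
    -- card of kernel ≤ p
    have hker_le : Nat.card φ.ker ≤ p := by
      have hsub : (φ.ker : Set F) ⊆
          ↑((Polynomial.X ^ p + Polynomial.X : Polynomial F).roots.toFinset) := by
        intro x hx
        simp only [SetLike.mem_coe, AddMonoidHom.mem_ker] at hx
        simp only [Multiset.mem_toFinset, Finset.coe_sort_coe, Finset.mem_coe,
          Polynomial.mem_roots hne1, Polynomial.IsRoot.def, Polynomial.eval_add,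
          Polynomial.eval_pow, Polynomial.eval_X]
        exact hx
      calc Nat.card φ.ker = (φ.ker : Set F).ncard := Nat.card_coe_set_eq _
        _ ≤ ((Polynomial.X ^ p + Polynomial.X : Polynomial F).roots.toFinset : Set F).ncard :=
            Set.ncard_le_ncard hsub (Set.toFinite _)
        _ = (Polynomial.X ^ p + Polynomial.X : Polynomial F).roots.toFinset.card :=
            Set.ncard_coe_finset _
        _ ≤ Multiset.card (Polynomial.X ^ p + Polynomial.X : Polynomial F).roots :=
            Multiset.toFinset_card_le _
        _ ≤ p := by
            have := Polynomial.card_roots' (Polynomial.X ^ p + Polynomial.X : Polynomial F)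
            rwa [hdeg1] at this
    -- card of S ≤ p
    have hS_le : S.ncard ≤ p := by
      have hsub : S ⊆
          ↑((Polynomial.X ^ p - Polynomial.X : Polynomial F).roots.toFinset) := by
        intro x hx
        simp only [hS, Set.mem_setOf_eq] at hx
        simp only [Multiset.mem_toFinset, Finset.mem_coe,
          Polynomial.mem_roots hne2, Polynomial.IsRoot.def, Polynomial.eval_sub,
          Polynomial.eval_pow, Polynomial.eval_X]
        rw [hx]; ring
      calc S.ncard ≤ ((Polynomial.X ^ p - Polynomial.X : Polynomial F).roots.toFinset : Set F).ncard :=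
            Set.ncard_le_ncard hsub (Set.toFinite _)
        _ = (Polynomial.X ^ p - Polynomial.X : Polynomial F).roots.toFinset.card :=
            Set.ncard_coe_finset _
        _ ≤ Multiset.card (Polynomial.X ^ p - Polynomial.X : Polynomial F).roots :=
            Multiset.toFinset_card_le _
        _ ≤ p := by
            have := Polynomial.card_roots' (Polynomial.X ^ p - Polynomial.X : Polynomial F)
            rwa [hdeg2] at this
    -- card range * card ker = p^2
    have hcard : Nat.card φ.range * Nat.card φ.ker = p ^ 2 := by
      have h1 := AddSubgroup.card_eq_card_quotient_mul_card_addSubgroup φ.ker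
      have h2 : Nat.card (F ⧸ φ.ker) = Nat.card φ.range :=
        Nat.card_congr (QuotientAddGroup.quotientKerEquivRange φ).toEquiv
      rw [h2] at h1
      rw [← h1, Nat.card_eq_fintype_card, hq]
    have hker_pos : 0 < Nat.card φ.ker := Nat.card_pos
    have hrange_ge : p ≤ Nat.card φ.range := by
      by_contra hcon
      push_neg at hcon
      have : Nat.card φ.range * Nat.card φ.ker < p * p := by
        calc Nat.card φ.range * Nat.card φ.ker ≤ Nat.card φ.range * p :=
              Nat.mul_le_mul_left _ hker_le
          _ < p * p := Nat.mul_lt_mul_of_lt_of_le hcon le_rfl (by omega)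
      rw [hcard, sq] at this
      omega
    have hrange_sub : (φ.range : Set F) ⊆ S := by
      rintro _ ⟨x, rfl⟩
      exact hφS x
    have hle : S.ncard ≤ (φ.range : Set F).ncard := by
      calc S.ncard ≤ p := hS_le
        _ ≤ Nat.card φ.range := hrange_ge
        _ = (φ.range : Set F).ncard := Nat.card_coe_set_eq _
    have heq : (φ.range : Set F) = S :=
      Set.eq_of_subset_of_ncard_le hrange_sub hle (Set.toFinite _)
    intro s hs
    rw [← heq] at hs
    obtain ⟨x, hx⟩ := hs
    exact ⟨x, hx⟩
  constructor
  · intro hf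
    refine (Set.Finite.surjOn_iff_bijOn_of_mapsTo (Set.toFinite S) hMapsTo).1 ?_
    intro u hu
    obtain ⟨z, hz⟩ := hsurj u hu
    obtain ⟨x, hx⟩ := hf.2 z
    simp only at hx
    refine ⟨x ^ p + x, hφS x, ?_⟩
    simp only
    rw [← hcomm x, hx, hz]
  · intro hh
    rw [Finite.injective_iff_bijective.symm]
    intro x y hxy
    simp only at hxy
    have h1 : (x ^ p + x) + (g.eval (x ^ p + x)) ^ p + g.eval (x ^ p + x) =
        (y ^ p + y) + (g.eval (y ^ p + y)) ^ p + g.eval (y ^ p + y) := by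
      rw [← hcomm x, ← hcomm y, hxy]
    have h2 : x ^ p + x = y ^ p + y := hh.injOn (hφS x) (hφS y) h1
    rw [h2] at hxy
    exact add_right_cancel hxy
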